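/- Let H : ℝⁿ → ℝ and let ∇̄H : ℝⁿ × ℝⁿ → ℝⁿ be a discrete gradient of H, i.e., ⟨∇̄H(z, z'), z' − z⟩ = H(z') − H(z) for all z, z'. Let J be skew-symmetric, R symmetric positive semi-definite, τ > 0, and suppose the discrete-gradient scheme [τ∂̄_{z₁}H(zⁿ,z^{n+1}); z₂^{n+1}−z₂ⁿ; 0] = (J−R)[z₁^{n+1}−z₁ⁿ; τ∂̄_{z₂}H(zⁿ,z^{n+1}); τz₃^{n+1/2}] holds (zero input). Then H(z^{n+1}) ≤ H(zⁿ). -/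

import Mathlib

open Matrix

lemma dot_append {m n : ℕ} (a c : Fin m → ℝ) (b d : Fin n → ℝ) :
    (Fin.append a b) ⬝ᵥ (Fin.append c d) = a ⬝ᵥ c + b ⬝ᵥ d := by
  simp [dotProduct, Fin.sum_univ_add]

lemma skew_quad {N : ℕ} (J : Matrix (Fin N) (Fin N) ℝ) (hJ : Jᵀ = -J)
    (x : Fin N → ℝ) : (J.mulVec x) ⬝ᵥ x = 0 := by
  have h1 : x ⬝ᵥ J.mulVec x = (Jᵀ.mulVec x) ⬝ᵥ x := by
    rw [Matrix.dotProduct_mulVec, Matrix.mulVec_transpose]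
  rw [hJ, Matrix.neg_mulVec, neg_dotProduct] at h1
  have h2 := dotProduct_comm x (J.mulVec x)
  linarith

theorem stmt_9 {n₁ n₂ n₃ : ℕ}
    (H : (Fin (n₁ + n₂) → ℝ) → ℝ)
    -- discrete gradient of H satisfying the secant property
    (DG : (Fin (n₁ + n₂) → ℝ) → (Fin (n₁ + n₂) → ℝ) → (Fin (n₁ + n₂) → ℝ))
    (hDG : ∀ z z' : Fin (n₁ + n₂) → ℝ, DG z z' ⬝ᵥ (z' - z) = H z' - H z)
    (J R : Matrix (Fin (n₁ + n₂ + n₃)) (Fin (n₁ + n₂ + n₃)) ℝ)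
    (hJ : Jᵀ = -J) (hR : R.PosSemidef)
    (τ : ℝ) (hτ : 0 < τ)
    -- zⁿ = (z₁, z₂, z₃) and z^{n+1} = (w₁, w₂, w₃)
    (z₁ w₁ : Fin n₁ → ℝ) (z₂ w₂ : Fin n₂ → ℝ) (z₃ w₃ : Fin n₃ → ℝ)
    -- discrete-gradient scheme (zero input); ∂̄_{z₁}H and ∂̄_{z₂}H are the
    -- first n₁ and last n₂ components of the discrete gradient ∇̄H(zⁿ, z^{n+1})
    (hsys : Fin.append (Fin.append
        (τ • fun i : Fin n₁ =>
          DG (Fin.append z₁ z₂) (Fin.append w₁ w₂) (Fin.castAdd n₂ i))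
        (w₂ - z₂)) (0 : Fin n₃ → ℝ)
      = (J - R).mulVec (Fin.append (Fin.append (w₁ - z₁)
          (τ • fun i : Fin n₂ =>
            DG (Fin.append z₁ z₂) (Fin.append w₁ w₂) (Fin.natAdd n₁ i)))
          (τ • ((1 / 2 : ℝ) • (z₃ + w₃))))) :
    H (Fin.append w₁ w₂) ≤ H (Fin.append z₁ z₂) := by
  set g : Fin (n₁ + n₂) → ℝ := DG (Fin.append z₁ z₂) (Fin.append w₁ w₂) with hg
  set u : Fin (n₁ + n₂ + n₃) → ℝ := Fin.append (Fin.append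
      (τ • fun i : Fin n₁ => g (Fin.castAdd n₂ i)) (w₂ - z₂)) (0 : Fin n₃ → ℝ) with hu
  set v : Fin (n₁ + n₂ + n₃) → ℝ := Fin.append (Fin.append (w₁ - z₁)
      (τ • fun i : Fin n₂ => g (Fin.natAdd n₁ i))) (τ • ((1 / 2 : ℝ) • (z₃ + w₃))) with hv
  -- u ⬝ v = τ (H w - H z)
  have hsecant := hDG (Fin.append z₁ z₂) (Fin.append w₁ w₂)
  have hsplit : g ⬝ᵥ (Fin.append w₁ w₂ - Fin.append z₁ z₂)
      = (fun i : Fin n₁ => g (Fin.castAdd n₂ i)) ⬝ᵥ (w₁ - z₁)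
        + (fun i : Fin n₂ => g (Fin.natAdd n₁ i)) ⬝ᵥ (w₂ - z₂) := by
    simp [dotProduct, Fin.sum_univ_add]
  have huv : u ⬝ᵥ v = τ * (H (Fin.append w₁ w₂) - H (Fin.append z₁ z₂)) := by
    rw [hu, hv, dot_append, dot_append, ← hsecant, hsplit]
    simp [smul_dotProduct, dotProduct_smul, dotProduct_comm (w₂ - z₂)]
    ring
  -- u ⬝ v ≤ 0
  have hRv : 0 ≤ v ⬝ᵥ R.mulVec v := by
    have := hR.dotProduct_mulVec_nonneg v
    simpa using this
  have hle : u ⬝ᵥ v ≤ 0 := by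
    rw [hsys, Matrix.sub_mulVec, sub_dotProduct, skew_quad J hJ v,
      dotProduct_comm (R.mulVec v) v]
    linarith
  nlinarith [huv, hle]
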